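/- Let x, y : ℝ → ℝ be two solutions of the Milne–Pinney-type system x' = p_x, p_x' = −ω(t)²x + b/x³ (i.e. second-order x'' = −ω(t)²x + b/x³) with x, y nowhere vanishing. Then F(t) = (1/4)(x(t)y'(t) − y(t)x'(t))² + (b/4)(x(t)² + y(t)²)²/(x(t)²y(t)²) is constant in t. -/

import Mathlib

/-- for two nowhere-vanishing solutions x, y of the Milne–Pinney equation
z'' = −ω(t)²z + b/z³, the function
F = (1/4)(x y' − y x')² + (b/4)(x² + y²)²/(x²y²) is constant in t. -/
theorem milnePinney_first_integral
    (ω : ℝ → ℝ) (hω : Continuous ω) (b : ℝ)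
    (x y vx vy : ℝ → ℝ)
    (hx0 : ∀ t, x t ≠ 0) (hy0 : ∀ t, y t ≠ 0)
    (hx : ∀ t, HasDerivAt x (vx t) t)
    (hy : ∀ t, HasDerivAt y (vy t) t)
    (hvx : ∀ t, HasDerivAt vx (-(ω t) ^ 2 * x t + b / (x t) ^ 3) t)
    (hvy : ∀ t, HasDerivAt vy (-(ω t) ^ 2 * y t + b / (y t) ^ 3) t)
    (F : ℝ → ℝ)
    (hF : ∀ t, F t = (1 / 4) * (x t * vy t - y t * vx t) ^ 2 +
        (b / 4) * ((x t) ^ 2 + (y t) ^ 2) ^ 2 / ((x t) ^ 2 * (y t) ^ 2)) :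
    ∀ t, HasDerivAt F 0 t := by
  intro t
  have hFfun : F = fun t => (1 / 4) * (x t * vy t - y t * vx t) ^ 2 +
      (b / 4) * ((x t) ^ 2 + (y t) ^ 2) ^ 2 / ((x t) ^ 2 * (y t) ^ 2) := funext hF
  have hden : (x t) ^ 2 * (y t) ^ 2 ≠ 0 :=
    mul_ne_zero (pow_ne_zero _ (hx0 t)) (pow_ne_zero _ (hy0 t))
  -- derivative of W = x*vy - y*vx
  have hW : HasDerivAt (fun t => x t * vy t - y t * vx t)
      (vx t * vy t + x t * (-(ω t) ^ 2 * y t + b / (y t) ^ 3)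
        - (vy t * vx t + y t * (-(ω t) ^ 2 * x t + b / (x t) ^ 3))) t :=
    ((hx t).mul (hvy t)).sub ((hy t).mul (hvx t))
  have h1 : HasDerivAt (fun t => (1 / 4) * (x t * vy t - y t * vx t) ^ 2)
      ((1 / 4) * ((↑2 : ℕ) * (x t * vy t - y t * vx t) ^ 1 *
        (vx t * vy t + x t * (-(ω t) ^ 2 * y t + b / (y t) ^ 3)
          - (vy t * vx t + y t * (-(ω t) ^ 2 * x t + b / (x t) ^ 3))))) t :=
    (hW.pow 2).const_mul _
  -- derivative of numerator N = (x²+y²)²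
  have hN : HasDerivAt (fun t => ((x t) ^ 2 + (y t) ^ 2) ^ 2)
      ((↑2 : ℕ) * ((x t) ^ 2 + (y t) ^ 2) ^ 1 *
        ((↑2 : ℕ) * x t ^ 1 * vx t + (↑2 : ℕ) * y t ^ 1 * vy t)) t :=
    (((hx t).pow 2).add ((hy t).pow 2)).pow 2
  have hD : HasDerivAt (fun t => (x t) ^ 2 * (y t) ^ 2)
      ((↑2 : ℕ) * x t ^ 1 * vx t * (y t) ^ 2 + (x t) ^ 2 * ((↑2 : ℕ) * y t ^ 1 * vy t)) t :=
    ((hx t).pow 2).mul ((hy t).pow 2)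
  have h2 : HasDerivAt (fun t => (b / 4) * ((x t) ^ 2 + (y t) ^ 2) ^ 2 / ((x t) ^ 2 * (y t) ^ 2))
      (((b / 4) * ((↑2 : ℕ) * ((x t) ^ 2 + (y t) ^ 2) ^ 1 *
          ((↑2 : ℕ) * x t ^ 1 * vx t + (↑2 : ℕ) * y t ^ 1 * vy t)) * ((x t) ^ 2 * (y t) ^ 2)
        - (b / 4) * ((x t) ^ 2 + (y t) ^ 2) ^ 2 *
          ((↑2 : ℕ) * x t ^ 1 * vx t * (y t) ^ 2 + (x t) ^ 2 * ((↑2 : ℕ) * y t ^ 1 * vy t)))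
        / ((x t) ^ 2 * (y t) ^ 2) ^ 2) t :=
    (hN.const_mul (b / 4)).div hD hden
  have hsum := h1.add h2
  rw [hFfun]
  convert hsum using 1
  have hx3 : (x t) ^ 3 ≠ 0 := pow_ne_zero _ (hx0 t)
  have hy3 : (y t) ^ 3 ≠ 0 := pow_ne_zero _ (hy0 t)
  rfl
  rfl
  rfl
  have hx1 := hx0 t
  have hy1 := hy0 t
  rw [eq_comm]
  field_simp
  ring
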